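/- arXiv:1305.6196 — 2 statements merged into one kernel-verified Lean document; each statement's English description precedes it below -/
import Mathlib

section
/- Let k ≥ 2 and d ≥ 2, and let B_{k,d} be the Bethe tree of k levels. Then its Wiener index satisfies W(B_{k,d}) = (d^k/(d-1)³)·[ (k-1)(d-1)(d^k + 1) - 2d(d^{k-1} - 1) ]. -/
open Finset

namespace BetheAux
open Finset SimpleGraph

variable {V : Type*} [DecidableEq V] {G : SimpleGraph V} {r u v p p' x : V}

lemma shortest_support_eq (hc : G.Connected) (w : G.Walk r u)
    (hw : w.length = G.dist r u) (hx : x ∈ w.support) (hdx : G.dist r u ≤ G.dist r x) :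
    x = u := by
  have h1 : G.dist r x ≤ (w.takeUntil x hx).length := dist_le _
  have h2 : (w.takeUntil x hx).length + (w.dropUntil x hx).length = w.length := by
    have h := congrArg SimpleGraph.Walk.length (w.take_spec hx)
    rwa [SimpleGraph.Walk.length_append] at h
  have h3 : (w.dropUntil x hx).length = 0 := by omega
  exact SimpleGraph.Walk.eq_of_length_eq_zero h3

lemma concat_isPath (hc : G.Connected) (w : G.Walk r p)
    (hw : w.length = G.dist r p) (h : G.Adj p v) (hd : G.dist r p ≤ G.dist r v) :
    (w.concat h).IsPath := by
  have hp : w.IsPath := w.isPath_of_length_eq_dist hw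
  have hv : v ∉ w.support := by
    intro hmem
    rcases eq_or_lt_of_le hd with he | hlt
    · exact h.ne (shortest_support_eq hc w hw hmem he.le).symm
    · have : G.dist r v ≤ (w.takeUntil v hmem).length := dist_le _
      have := (SimpleGraph.Walk.length_takeUntil_le w hmem)
      omega
  rw [← SimpleGraph.Walk.isPath_reverse_iff, SimpleGraph.Walk.reverse_concat]
  rw [SimpleGraph.Walk.cons_isPath_iff]
  exact ⟨hp.reverse, by simpa using hv⟩

lemma parent_unique (hT : G.IsTree)
    (h : G.Adj p v) (hd : G.dist r p + 1 = G.dist r v)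
    (h' : G.Adj p' v) (hd' : G.dist r p' + 1 = G.dist r v) : p = p' := by
  have hc := hT.isConnected
  obtain ⟨w, hw⟩ := hc.exists_walk_length_eq_dist r p
  obtain ⟨w', hw'⟩ := hc.exists_walk_length_eq_dist r p'
  have P1 := concat_isPath hc w hw h (by omega)
  have P2 := concat_isPath hc w' hw' h' (by omega)
  have := hT.IsAcyclic.path_unique ⟨w.concat h, P1⟩ ⟨w'.concat h', P2⟩
  have heq : w.concat h = w'.concat h' := congrArg Subtype.val this
  obtain ⟨hv, -⟩ := SimpleGraph.Walk.concat_inj heq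
  exact hv

lemma adj_dist_ne (hT : G.IsTree) (h : G.Adj u v) : G.dist r u ≠ G.dist r v := by
  intro he
  have hc := hT.isConnected
  obtain ⟨w, hw⟩ := hc.exists_walk_length_eq_dist r u
  have P1 := concat_isPath hc w hw h he.le
  have P2 : w.IsPath := w.isPath_of_length_eq_dist hw
  obtain ⟨w', hw'⟩ := hc.exists_walk_length_eq_dist r v
  have P3 := w'.isPath_of_length_eq_dist hw'
  have := hT.IsAcyclic.path_unique ⟨w.concat h, P1⟩ ⟨w', P3⟩
  have heq : w.concat h = w' := congrArg Subtype.val this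
  have hlen := congrArg SimpleGraph.Walk.length heq
  rw [SimpleGraph.Walk.length_concat] at hlen
  omega

lemma adj_dist (hT : G.IsTree) (h : G.Adj u v) :
    G.dist r v = G.dist r u + 1 ∨ G.dist r u = G.dist r v + 1 := by
  have hc := hT.isConnected
  have h1 : G.dist u v = 1 := (dist_eq_one_iff_adj).2 h
  have h2 : G.dist v u = 1 := (dist_eq_one_iff_adj).2 h.symm
  have t1 := hc.dist_triangle (u := r) (v := u) (w := v)
  have t2 := hc.dist_triangle (u := r) (v := v) (w := u)
  have := adj_dist_ne (r := r) hT h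
  omega

omit [DecidableEq V] in
lemma exists_toward (hc : G.Connected) {m : ℕ} (hv : G.dist u v = m + 1) :
    ∃ q, G.Adj q v ∧ G.dist u q = m := by
  obtain ⟨w, hw⟩ := hc.exists_walk_length_eq_dist v u
  rw [dist_comm] at hv
  cases w with
  | nil => rw [hv] at hw; simp at hw
  | @cons _ q _ h w' =>
    refine ⟨q, h.symm, ?_⟩
    have h1 : G.dist u q ≤ m := by
      have h0 : G.dist u q ≤ w'.reverse.length := dist_le w'.reverse
      simp only [SimpleGraph.Walk.length_reverse] at h0
      simp only [SimpleGraph.Walk.length_cons] at hw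
      omega
    have h2 : G.dist u v ≤ G.dist u q + 1 := by
      have := hc.dist_triangle (u := u) (v := q) (w := v)
      rw [dist_eq_one_iff_adj.2 h.symm] at this
      omega
    rw [SimpleGraph.dist_comm] at hv
    omega

end BetheAux

namespace BetheAux
open Finset SimpleGraph

variable {V : Type*} [DecidableEq V] {G : SimpleGraph V} {r u v p w : V}

/-- If `u ≠ v`, `dist r u ≤ dist r v`, and `p` is the parent of `v`,
then `dist u p + 1 = dist u v`. -/
lemma key (hT : G.IsTree) :
    ∀ (ℓ : ℕ) (u v p : V), G.dist u v = ℓ → u ≠ v → G.dist r u ≤ G.dist r v →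
      G.Adj p v → G.dist r p + 1 = G.dist r v → G.dist u p + 1 = G.dist u v := by
  have hc := hT.isConnected
  intro ℓ
  induction ℓ with
  | zero =>
    intro u v p h0 hne _ _ _
    exact absurd ((hc.dist_eq_zero_iff).1 h0) hne
  | succ m ih =>
    intro u v p hdist hne hle hadj hpd
    obtain ⟨q, hqv, hq⟩ := exists_toward hc hdist
    rcases adj_dist (r := r) hT hqv with hcase | hcase
    · -- q is the parent of v
      have : q = p := parent_unique hT hqv (by omega) hadj hpd
      rw [this] at hq
      omega
    · -- q is a child of v (v is parent of q)
      have huq : u ≠ q := by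
        intro h; rw [h] at hle; omega
      cases m with
      | zero =>
        have : u = q := (hc.dist_eq_zero_iff).1 hq
        exact absurd this huq
      | succ m' =>
        have hcontra := ih u q v hq huq (by omega) hqv.symm (by omega)
        omega

lemma anc_refl : G.dist r v = G.dist r v + G.dist v v := by simp

lemma anc_parent (hT : G.IsTree) (hadj : G.Adj p v) (hp : G.dist r p + 1 = G.dist r v)
    (w : V) :
    (G.dist r v = G.dist r w + G.dist w v) ↔
      (w = v ∨ G.dist r p = G.dist r w + G.dist w p) := by
  have hc := hT.isConnected
  constructor
  · intro hw
    by_cases hwv : w = v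
    · exact Or.inl hwv
    · right
      have hpos : 0 < G.dist w v := hc.pos_dist_of_ne hwv
      obtain ⟨m, hm⟩ : ∃ m, G.dist w v = m + 1 := ⟨G.dist w v - 1, by omega⟩
      obtain ⟨q, hqv, hq⟩ := exists_toward hc hm
      have h1 : G.dist r q ≤ G.dist r w + m := by
        have := hc.dist_triangle (u := r) (v := w) (w := q)
        omega
      have h2 : G.dist r v ≤ G.dist r q + 1 := by
        have := hc.dist_triangle (u := r) (v := q) (w := v)
        rw [dist_eq_one_iff_adj.2 hqv] at this
        omega
      have hqp : q = p := parent_unique hT hqv (by omega) hadj hp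
      rw [hqp] at hq
      have h3 : G.dist r p ≤ G.dist r w + G.dist w p := hc.dist_triangle
      have h4 : G.dist w p ≤ m := hq.le
      omega
  · rintro (rfl | hw)
    · simp
    · have h1 : G.dist w v ≤ G.dist w p + 1 := by
        have := hc.dist_triangle (u := w) (v := p) (w := v)
        rw [dist_eq_one_iff_adj.2 hadj] at this
        omega
      have h2 : G.dist r v ≤ G.dist r w + G.dist w v := hc.dist_triangle
      have h3 : G.dist w v ≥ G.dist w p - 1 := by
        have := hc.dist_triangle (u := w) (v := v) (w := p)
        rw [dist_eq_one_iff_adj.2 hadj.symm] at this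
        omega
      omega

/-- Not an ancestor: `v` is not an ancestor of its parent. -/
lemma not_anc_parent (hc : G.Connected) (hadj : G.Adj p v)
    (hp : G.dist r p + 1 = G.dist r v) :
    ¬ (G.dist r p = G.dist r v + G.dist v p) := by
  intro h
  have := hc.dist_triangle (u := r) (v := p) (w := v)
  omega

/-- If `dist r u ≤ dist r v` and `u ≠ v` then `v` is not an ancestor of `u`. -/
lemma not_anc_of_le (hc : G.Connected) (hne : u ≠ v) (hle : G.dist r u ≤ G.dist r v) :
    ¬ (G.dist r u = G.dist r v + G.dist v u) := by
  intro h
  have : G.dist v u = 0 := by omega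
  exact hne ((hc.dist_eq_zero_iff).1 this).symm

end BetheAux

namespace BetheAux
open Finset SimpleGraph

variable {V : Type*} [DecidableEq V] {G : SimpleGraph V} {r u v p w : V}

/-- The parent of a vertex (relative to root `r`). -/
noncomputable def par (G : SimpleGraph V) (r v : V) : V :=
  letI := Classical.propDecidable (∃ p, G.Adj p v ∧ G.dist r p + 1 = G.dist r v)
  if h : ∃ p, G.Adj p v ∧ G.dist r p + 1 = G.dist r v then h.choose else v

lemma par_spec (hc : G.Connected) {m : ℕ} (hv : G.dist r v = m + 1) :
    G.Adj (par G r v) v ∧ G.dist r (par G r v) + 1 = G.dist r v := by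
  obtain ⟨q, hq1, hq2⟩ := exists_toward hc hv
  have h : ∃ p, G.Adj p v ∧ G.dist r p + 1 = G.dist r v := ⟨q, hq1, by omega⟩
  rw [par]
  split_ifs with hex
  exact h.choose_spec

lemma par_eq (hT : G.IsTree) {m : ℕ} (hv : G.dist r v = m + 1)
    (h : G.Adj p v) (hp : G.dist r p + 1 = G.dist r v) : par G r v = p := by
  obtain ⟨h1, h2⟩ := par_spec hT.isConnected hv
  exact parent_unique hT h1 h2 h hp

/-- The set of `w` separating `u` from `v`. -/
noncomputable def sep (G : SimpleGraph V) [Fintype V] (r u v : V) : Finset V :=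
  univ.filter (fun w => ¬ ((G.dist r u = G.dist r w + G.dist w u) ↔
    (G.dist r v = G.dist r w + G.dist w v)))

variable [Fintype V]

lemma sep_comm : sep G r u v = sep G r v u := by
  apply filter_congr
  intro w _
  constructor <;> (intro h h2; exact h h2.symm)

lemma dist_eq_card_sep (hT : G.IsTree) (u v : V) :
    G.dist u v = (sep G r u v).card := by
  have hc := hT.isConnected
  suffices H : ∀ (n : ℕ) (u v : V), G.dist r u + G.dist r v ≤ n →
      G.dist r u ≤ G.dist r v → G.dist u v = (sep G r u v).card by
    rcases le_total (G.dist r u) (G.dist r v) with h | h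
    · exact H (G.dist r u + G.dist r v) u v le_rfl h
    · rw [SimpleGraph.dist_comm, sep_comm]
      exact H (G.dist r v + G.dist r u) v u le_rfl h
  intro n
  induction n with
  | zero =>
    intro u v h1 _
    have hu : G.dist r u = 0 := by omega
    have hv : G.dist r v = 0 := by omega
    have : u = v := ((hc.dist_eq_zero_iff).1 hu).symm.trans ((hc.dist_eq_zero_iff).1 hv)
    subst this
    rw [SimpleGraph.dist_self]
    symm
    rw [Finset.card_eq_zero, sep, Finset.filter_eq_empty_iff]
    intro w _
    simp
  | succ n ih =>
    intro u v hn hle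
    by_cases hne : u = v
    · subst hne
      rw [SimpleGraph.dist_self]
      symm
      rw [Finset.card_eq_zero, sep, Finset.filter_eq_empty_iff]
      intro w _
      simp
    · have hvpos : 0 < G.dist r v := by
        rcases Nat.eq_zero_or_pos (G.dist r v) with h0 | h0
        · exfalso
          have hv : v = r := ((hc.dist_eq_zero_iff).1 h0).symm
          have hu : u = r := ((hc.dist_eq_zero_iff).1 (show G.dist r u = 0 by omega)).symm
          exact hne (hu.trans hv.symm)
        · exact h0
      obtain ⟨m, hm⟩ : ∃ m, G.dist r v = m + 1 := ⟨G.dist r v - 1, by omega⟩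
      set p := par G r v with hpdef
      obtain ⟨hadj, hpd⟩ := par_spec hc hm
      rw [← hpdef] at hadj hpd
      -- dist u v = dist u p + 1
      have hkey : G.dist u p + 1 = G.dist u v :=
        key hT (G.dist u v) u v p rfl hne hle hadj hpd
      -- sep u v = insert v (sep u p)
      have hsep : sep G r u v = insert v (sep G r u p) := by
        ext w
        simp only [sep, mem_insert, mem_filter, mem_univ, true_and]
        by_cases hwv : w = v
        · subst hwv
          have hAu := not_anc_of_le hc hne hle
          constructor
          · intro _; exact Or.inl rfl
          · intro _ hiff2
            exact hAu (hiff2.2 (by simp))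
        · have hiff := anc_parent (r := r) hT hadj hpd w
          rw [hiff]
          constructor
          · intro h
            right
            intro h2
            exact h ⟨fun ha => Or.inr (h2.1 ha),
              fun hb => hb.elim (fun he => absurd he hwv) h2.2⟩
          · rintro (h | h)
            · exact absurd h hwv
            · intro h2
              exact h ⟨fun ha => (h2.1 ha).elim (fun he => absurd he hwv) id,
                fun hb => h2.2 (Or.inr hb)⟩
      have hvnot : v ∉ sep G r u p := by
        simp only [sep, mem_filter, mem_univ, true_and, not_not]
        constructor
        · intro h; exact absurd h (not_anc_of_le hc hne hle)
        · intro h; exact absurd h (not_anc_parent hc hadj hpd)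
      rw [hsep, Finset.card_insert_of_notMem hvnot]
      have hcard : G.dist u p = (sep G r u p).card := by
        rcases le_total (G.dist r u) (G.dist r p) with h | h
        · exact ih u p (by omega) h
        · rw [SimpleGraph.dist_comm, sep_comm]
          exact ih p u (by omega) h
      omega

end BetheAux

namespace BetheAux
open Finset SimpleGraph

variable {V : Type*} [DecidableEq V] [Fintype V] {G : SimpleGraph V} [DecidableRel G.Adj]
  {r u v p w : V} {K d : ℕ}

/-- level set -/
noncomputable def lvl (G : SimpleGraph V) [Fintype V] (r : V) (i : ℕ) : Finset V :=
  univ.filter (fun v => G.dist r v = i)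

/-- descendants -/
noncomputable def desc (G : SimpleGraph V) [Fintype V] (r w : V) : Finset V :=
  univ.filter (fun u => G.dist r u = G.dist r w + G.dist w u)

lemma card_lvl_zero (hc : G.Connected) : (lvl G r 0).card = 1 := by
  have : lvl G r 0 = {r} := by
    ext x
    simp only [lvl, mem_filter, mem_univ, true_and, mem_singleton]
    rw [hc.dist_eq_zero_iff]
    exact comm
  rw [this, card_singleton]

lemma card_lvl_succ (hT : G.IsTree)
    (hchild : ∀ v : V, G.dist r v = K → ((G.neighborFinset v).filter
      (fun x => G.dist r x = K + 1)).card = d) :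
    (lvl G r (K + 1)).card = d * (lvl G r K).card := by
  have hc := hT.isConnected
  have hmap : ∀ x ∈ lvl G r (K + 1), par G r x ∈ lvl G r K := by
    intro x hx
    simp only [lvl, mem_filter, mem_univ, true_and] at hx ⊢
    obtain ⟨-, h2⟩ := par_spec hc hx
    omega
  rw [Finset.card_eq_sum_card_fiberwise hmap]
  have hfib : ∀ u ∈ lvl G r K, ((lvl G r (K+1)).filter (fun x => par G r x = u)).card = d := by
    intro u hu
    simp only [lvl, mem_filter, mem_univ, true_and] at hu
    have : (lvl G r (K+1)).filter (fun x => par G r x = u) =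
        (G.neighborFinset u).filter (fun x => G.dist r x = K + 1) := by
      ext x
      simp only [lvl, mem_filter, mem_univ, true_and, mem_neighborFinset]
      constructor
      · rintro ⟨h1, rfl⟩
        exact ⟨(par_spec hc h1).1, h1⟩
      · rintro ⟨h1, h2⟩
        exact ⟨h2, par_eq hT h2 h1 (by omega)⟩
    rw [this]
    exact hchild u hu
  rw [Finset.sum_congr rfl hfib, Finset.sum_const, smul_eq_mul, mul_comm]

lemma mem_desc_self : w ∈ desc G r w := by
  simp [desc]

lemma desc_lvl_self (hc : G.Connected) {i : ℕ} (hw : G.dist r w = i) :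
    (desc G r w).filter (fun v => G.dist r v = i) = {w} := by
  ext x
  simp only [desc, mem_filter, mem_univ, true_and, mem_singleton]
  constructor
  · rintro ⟨h1, h2⟩
    have : G.dist w x = 0 := by omega
    exact ((hc.dist_eq_zero_iff).1 this).symm
  · rintro rfl
    simp [hw]

lemma desc_lvl_succ (hT : G.IsTree) {i j : ℕ} (hw : G.dist r w = i) (hij : i ≤ j)
    (hchild : ∀ v : V, G.dist r v = j → ((G.neighborFinset v).filter
      (fun x => G.dist r x = j + 1)).card = d) :
    ((desc G r w).filter (fun v => G.dist r v = j + 1)).card =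
      d * ((desc G r w).filter (fun v => G.dist r v = j)).card := by
  have hc := hT.isConnected
  have hmap : ∀ x ∈ (desc G r w).filter (fun v => G.dist r v = j + 1),
      par G r x ∈ (desc G r w).filter (fun v => G.dist r v = j) := by
    intro x hx
    simp only [desc, mem_filter, mem_univ, true_and] at hx ⊢
    obtain ⟨h1, h2⟩ := hx
    obtain ⟨ha, hb⟩ := par_spec hc h2
    have hwx : w ≠ x := by
      intro he; rw [← he] at h2; omega
    have := (anc_parent (r := r) hT ha (by omega) w).1 h1
    rcases this with he | hanc
    · exact absurd he hwx
    · exact ⟨hanc, by omega⟩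
  rw [Finset.card_eq_sum_card_fiberwise hmap]
  have hfib : ∀ u ∈ (desc G r w).filter (fun v => G.dist r v = j),
      (((desc G r w).filter (fun v => G.dist r v = j + 1)).filter
        (fun x => par G r x = u)).card = d := by
    intro u hu
    simp only [desc, mem_filter, mem_univ, true_and] at hu
    obtain ⟨hu1, hu2⟩ := hu
    have heq : ((desc G r w).filter (fun v => G.dist r v = j + 1)).filter
        (fun x => par G r x = u) =
        (G.neighborFinset u).filter (fun x => G.dist r x = j + 1) := by
      ext x
      simp only [desc, mem_filter, mem_univ, true_and, mem_neighborFinset]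
      constructor
      · rintro ⟨⟨h1, h2⟩, rfl⟩
        exact ⟨(par_spec hc h2).1, h2⟩
      · rintro ⟨h1, h2⟩
        have hpar : par G r x = u := par_eq hT h2 h1 (by omega)
        have hwx : w ≠ x := by
          intro he; rw [← he] at h2; omega
        refine ⟨⟨?_, h2⟩, hpar⟩
        rw [anc_parent (r := r) hT h1 (by omega) w]
        right
        exact hu1
    rw [heq]
    exact hchild u hu2
  rw [Finset.sum_congr rfl hfib, Finset.sum_const, smul_eq_mul, mul_comm]

end BetheAux

namespace BetheAux
open Finset SimpleGraph

variable {V : Type*} [DecidableEq V] [Fintype V] {G : SimpleGraph V} [DecidableRel G.Adj]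
  {r w : V} {K d : ℕ}

lemma card_lvl (hT : G.IsTree)
    (hchild : ∀ j < K, ∀ v : V, G.dist r v = j → ((G.neighborFinset v).filter
      (fun x => G.dist r x = j + 1)).card = d) :
    ∀ i, i ≤ K → (lvl G r i).card = d ^ i := by
  intro i
  induction i with
  | zero => intro _; simpa using card_lvl_zero (r := r) hT.isConnected
  | succ i ih =>
    intro hi
    rw [card_lvl_succ hT (hchild i (by omega)), ih (by omega), pow_succ, mul_comm]

lemma card_univ_levels (hT : G.IsTree)
    (hle : ∀ v : V, G.dist r v ≤ K)
    (hchild : ∀ j < K, ∀ v : V, G.dist r v = j → ((G.neighborFinset v).filter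
      (fun x => G.dist r x = j + 1)).card = d) :
    Fintype.card V = ∑ i ∈ range (K + 1), d ^ i := by
  have hmap : ∀ v : V, v ∈ (univ : Finset V) → G.dist r v ∈ range (K + 1) := by
    intro v _; rw [mem_range]; exact Nat.lt_succ_of_le (hle v)
  rw [← Finset.card_univ, Finset.card_eq_sum_card_fiberwise hmap]
  refine Finset.sum_congr rfl fun i hi => ?_
  rw [mem_range] at hi
  exact card_lvl hT hchild i (by omega)

lemma desc_root (hc : G.Connected) : desc G r r = (univ : Finset V) := by
  ext u
  simp [desc, SimpleGraph.dist_self]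

lemma card_desc (hT : G.IsTree) {i : ℕ}
    (hle : ∀ v : V, G.dist r v ≤ K)
    (hchild : ∀ j < K, ∀ v : V, G.dist r v = j → ((G.neighborFinset v).filter
      (fun x => G.dist r x = j + 1)).card = d)
    (hw : G.dist r w = i) (hiK : i ≤ K) :
    (desc G r w).card = ∑ t ∈ range (K + 1 - i), d ^ t := by
  have hc := hT.isConnected
  have hlev : ∀ t, t ≤ K - i →
      ((desc G r w).filter (fun v => G.dist r v = i + t)).card = d ^ t := by
    intro t
    induction t with
    | zero =>
      intro _
      simpa using congrArg Finset.card (desc_lvl_self (r := r) hc hw)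
    | succ t ih =>
      intro ht
      have h1 : i + (t + 1) = (i + t) + 1 := by omega
      rw [h1, desc_lvl_succ hT hw (by omega) (hchild (i + t) (by omega)),
        ih (by omega), pow_succ, mul_comm]
  have hmap : ∀ u ∈ desc G r w, G.dist r u ∈ Icc i K := by
    intro u hu
    simp only [desc, mem_filter, mem_univ, true_and] at hu
    rw [mem_Icc]
    exact ⟨by omega, hle u⟩
  rw [Finset.card_eq_sum_card_fiberwise hmap, ← Finset.Ico_add_one_right_eq_Icc,
    Finset.sum_Ico_eq_sum_range]
  refine Finset.sum_congr rfl fun t ht => ?_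
  rw [mem_range] at ht
  exact hlev t (by omega)

lemma xor_count (S : Finset V) (P : V → Prop) [DecidablePred P]
    (hP : ∀ u, P u ↔ u ∈ S) :
    (∑ u : V, ∑ v : V, if ¬ (P u ↔ P v) then 1 else 0) =
      2 * S.card * (Fintype.card V - S.card) := by
  have hinner : ∀ u : V, (∑ v : V, if ¬ (P u ↔ P v) then 1 else 0) =
      if P u then Fintype.card V - S.card else S.card := by
    intro u
    rw [← Finset.card_filter]
    by_cases hu : P u
    · rw [if_pos hu]
      have : univ.filter (fun v => ¬ (P u ↔ P v)) = univ \ S := by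
        ext v
        simp only [mem_filter, mem_univ, true_and, mem_sdiff]
        rw [hP v]
        tauto
      rw [this, Finset.card_sdiff_of_subset (subset_univ S), Finset.card_univ]
    · rw [if_neg hu]
      have : univ.filter (fun v => ¬ (P u ↔ P v)) = S := by
        ext v
        simp only [mem_filter, mem_univ, true_and]
        rw [hP v]
        tauto
      rw [this]
  rw [Finset.sum_congr rfl fun u _ => hinner u]
  rw [Finset.sum_ite, Finset.sum_const, Finset.sum_const, smul_eq_mul, smul_eq_mul]
  have h1 : univ.filter (fun u => P u) = S := by
    ext u; simp only [mem_filter, mem_univ, true_and]; exact hP u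
  have h2 : univ.filter (fun u => ¬ P u) = univ \ S := by
    ext u; simp only [mem_filter, mem_univ, true_and, mem_sdiff]; rw [hP u]
  rw [h1, h2, Finset.card_sdiff_of_subset (subset_univ S)]
  simp only [Finset.card_univ]
  ring

theorem total_sum (hT : G.IsTree) (hK : 1 ≤ K)
    (hdeg : ∀ i ∈ Icc 1 K, ∀ v : V, G.dist r v = i - 1 →
      ((G.neighborFinset v).filter (fun u => G.dist r u = i)).card = d)
    (hle : ∀ v : V, G.dist r v ≤ K) :
    (∑ u : V, ∑ v : V, G.dist u v) =
      ∑ i ∈ Icc 1 K, d ^ i * (2 * (∑ t ∈ range (K + 1 - i), d ^ t) *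
        (Fintype.card V - ∑ t ∈ range (K + 1 - i), d ^ t)) := by
  have hc := hT.isConnected
  have hchild : ∀ j < K, ∀ v : V, G.dist r v = j → ((G.neighborFinset v).filter
      (fun x => G.dist r x = j + 1)).card = d := by
    intro j hj v hv
    exact hdeg (j + 1) (mem_Icc.2 ⟨by omega, by omega⟩) v (by simpa using hv)
  -- step 1: rewrite each distance as a separator count
  have step1 : (∑ u : V, ∑ v : V, G.dist u v) =
      ∑ w : V, ∑ u : V, ∑ v : V, (if ¬ ((G.dist r u = G.dist r w + G.dist w u) ↔
        (G.dist r v = G.dist r w + G.dist w v)) then 1 else 0) := by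
    have : ∀ u v : V, G.dist u v = ∑ w : V, (if ¬ ((G.dist r u = G.dist r w + G.dist w u) ↔
        (G.dist r v = G.dist r w + G.dist w v)) then 1 else 0) := by
      intro u v
      rw [dist_eq_card_sep (r := r) hT u v, sep, Finset.card_filter]
    calc (∑ u : V, ∑ v : V, G.dist u v)
        = ∑ u : V, ∑ v : V, ∑ w : V, (if ¬ ((G.dist r u = G.dist r w + G.dist w u) ↔
            (G.dist r v = G.dist r w + G.dist w v)) then 1 else 0) :=
          Finset.sum_congr rfl fun u _ => Finset.sum_congr rfl fun v _ => this u v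
      _ = ∑ u : V, ∑ w : V, ∑ v : V, (if ¬ ((G.dist r u = G.dist r w + G.dist w u) ↔
            (G.dist r v = G.dist r w + G.dist w v)) then 1 else 0) :=
          Finset.sum_congr rfl fun u _ => Finset.sum_comm
      _ = ∑ w : V, ∑ u : V, ∑ v : V, (if ¬ ((G.dist r u = G.dist r w + G.dist w u) ↔
            (G.dist r v = G.dist r w + G.dist w v)) then 1 else 0) := Finset.sum_comm
  rw [step1]
  -- step 2: evaluate the inner double sum for each w
  have step2 : ∀ w : V, (∑ u : V, ∑ v : V,
      (if ¬ ((G.dist r u = G.dist r w + G.dist w u) ↔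
        (G.dist r v = G.dist r w + G.dist w v)) then 1 else 0)) =
      2 * (desc G r w).card * (Fintype.card V - (desc G r w).card) := by
    intro w
    exact xor_count (desc G r w) (fun u => G.dist r u = G.dist r w + G.dist w u)
      (fun u => by simp [desc])
  rw [Finset.sum_congr rfl fun w _ => step2 w]
  -- step 3: group by level
  have hmap : ∀ w : V, w ∈ (univ : Finset V) → G.dist r w ∈ range (K + 1) := by
    intro w _; rw [mem_range]; exact Nat.lt_succ_of_le (hle w)
  rw [← Finset.sum_fiberwise_of_maps_to hmap]
  have hsplit : range (K + 1) = insert 0 (Icc 1 K) := by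
    ext x
    simp only [mem_range, mem_insert, mem_Icc]
    omega
  rw [hsplit, Finset.sum_insert (by simp)]
  have hzero : (∑ w ∈ univ.filter (fun w => G.dist r w = 0),
      2 * (desc G r w).card * (Fintype.card V - (desc G r w).card)) = 0 := by
    apply Finset.sum_eq_zero
    intro w hw
    simp only [mem_filter, mem_univ, true_and] at hw
    have : w = r := ((hc.dist_eq_zero_iff).1 hw).symm
    subst this
    rw [desc_root hc, Finset.card_univ, Nat.sub_self, Nat.mul_zero]
  rw [hzero, Nat.zero_add]
  refine Finset.sum_congr rfl fun i hi => ?_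
  rw [mem_Icc] at hi
  have hsum : ∀ w ∈ univ.filter (fun w => G.dist r w = i),
      2 * (desc G r w).card * (Fintype.card V - (desc G r w).card) =
      2 * (∑ t ∈ range (K + 1 - i), d ^ t) *
        (Fintype.card V - ∑ t ∈ range (K + 1 - i), d ^ t) := by
    intro w hw
    simp only [mem_filter, mem_univ, true_and] at hw
    rw [card_desc hT hle hchild hw (by omega)]
  rw [Finset.sum_congr rfl hsum, Finset.sum_const]
  have : (univ.filter (fun w => G.dist r w = i)).card = d ^ i :=
    card_lvl hT hchild i (by omega)
  rw [this, smul_eq_mul]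

end BetheAux

/-- The Wiener index of a graph: the sum of the distances over all unordered pairs of
vertices, i.e. half of the sum over all ordered pairs. -/
noncomputable def wienerIndex {V : Type*} [Fintype V] (G : SimpleGraph V) : ℕ :=
  (∑ u : V, ∑ v : V, G.dist u v) / 2

/-- `G` is a generalized Bethe tree of `k+1` levels with root `r` and degree sequence
`d 1, …, d k`: `G` is a tree; for `1 ≤ i ≤ k`, every vertex at distance `i-1` from `r` has
exactly `d i` neighbors at distance `i` from `r`; every vertex is at distance at most `k`
from `r`; and every vertex at distance `k` from `r` is a pendent vertex. -/
def IsGeneralizedBetheTree {V : Type*} [Fintype V] (G : SimpleGraph V) [DecidableRel G.Adj]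
    (r : V) (k : ℕ) (d : ℕ → ℕ) : Prop :=
  G.IsTree ∧
  (∀ i ∈ Finset.Icc 1 k, ∀ v : V, G.dist r v = i - 1 →
      ((G.neighborFinset v).filter (fun u => G.dist r u = i)).card = d i) ∧
  (∀ v : V, G.dist r v ≤ k) ∧
  (∀ v : V, G.dist r v = k → G.degree v = 1)

/-- Wiener index of the Bethe tree `B_{k,d}` of `k` levels (the generalized Bethe tree of `k`
levels with constant degree sequence `dᵢ = d` for `1 ≤ i ≤ k-1`):
`W(B_{k,d}) = d^k/(d-1)³ · [ (k-1)(d-1)(d^k + 1) - 2 d (d^{k-1} - 1) ]`. -/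
theorem wiener_index_betheTree {V : Type*} [Fintype V] (G : SimpleGraph V)
    [DecidableRel G.Adj] (r : V) (k d : ℕ) (hk : 2 ≤ k) (hd : 2 ≤ d)
    (hG : IsGeneralizedBetheTree G r (k - 1) (fun _ => d)) :
    (wienerIndex G : ℚ) =
      (d : ℚ) ^ k / ((d : ℚ) - 1) ^ 3 *
        (((k : ℚ) - 1) * ((d : ℚ) - 1) * ((d : ℚ) ^ k + 1)
          - 2 * (d : ℚ) * ((d : ℚ) ^ (k - 1) - 1)) := by
  classical
  obtain ⟨K, rfl⟩ : ∃ K, k = K + 1 := ⟨k - 1, by omega⟩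
  have hK : 1 ≤ K := by omega
  simp only [Nat.add_sub_cancel] at hG ⊢
  obtain ⟨hT, hdeg, hle, -⟩ := hG
  have hdeg' : ∀ i ∈ Icc 1 K, ∀ v : V, G.dist r v = i - 1 →
      ((G.neighborFinset v).filter (fun u => G.dist r u = i)).card = d := hdeg
  -- natural number quantities
  set n := Fintype.card V with hn
  set s : ℕ → ℕ := fun i => ∑ t ∈ range (K + 1 - i), d ^ t with hs
  have htot := BetheAux.total_sum (r := r) hT hK hdeg' hle
  have hchild : ∀ j < K, ∀ v : V, G.dist r v = j → ((G.neighborFinset v).filter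
      (fun x => G.dist r x = j + 1)).card = d := by
    intro j hj v hv
    exact hdeg' (j + 1) (mem_Icc.2 ⟨by omega, by omega⟩) v (by simpa using hv)
  have hcardV : n = ∑ i ∈ range (K + 1), d ^ i :=
    BetheAux.card_univ_levels (r := r) hT hle hchild
  -- the Wiener index as a natural number
  have htot2 : (∑ u : V, ∑ v : V, G.dist u v) =
      2 * ∑ i ∈ Icc 1 K, d ^ i * (s i * (n - s i)) := by
    rw [htot, Finset.mul_sum]
    exact Finset.sum_congr rfl fun i _ => by ring
  have hwi : wienerIndex G = ∑ i ∈ Icc 1 K, d ^ i * (s i * (n - s i)) := by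
    rw [wienerIndex, htot2, Nat.mul_div_cancel_left _ (by norm_num)]
  -- bound s i ≤ n
  have hsn : ∀ i, s i ≤ n := by
    intro i
    rw [hcardV, hs]
    exact Finset.sum_le_sum_of_subset (Finset.range_subset_range.2 (by omega))
  -- move to ℚ
  set q : ℚ := (d : ℚ) with hq
  have hq1 : q - 1 ≠ 0 := by
    have : (2 : ℚ) ≤ q := by rw [hq]; exact_mod_cast hd
    intro h; nlinarith
  have hq0 : q ≠ 0 := by
    have : (2 : ℚ) ≤ q := by rw [hq]; exact_mod_cast hd
    intro h; nlinarith
  have hqne1 : q ≠ 1 := fun h => hq1 (by rw [h]; ring)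
  have hSq : ∀ i : ℕ, ((s i : ℕ) : ℚ) = (q ^ (K + 1 - i) - 1) / (q - 1) := by
    intro i
    rw [hs]
    push_cast
    rw [geom_sum_eq hqne1]
  have hNq : ((n : ℕ) : ℚ) = (q ^ (K + 1) - 1) / (q - 1) := by
    rw [hcardV]
    push_cast
    rw [geom_sum_eq hqne1]
  -- cast the sum
  have hcast : (wienerIndex G : ℚ) =
      ∑ i ∈ Icc 1 K, q ^ i * (((s i : ℕ) : ℚ) * (((n : ℕ) : ℚ) - ((s i : ℕ) : ℚ))) := by
    rw [hwi]
    push_cast [Nat.cast_sub (hsn _)]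
    exact Finset.sum_congr rfl fun i _ => by push_cast [Nat.cast_sub (hsn i)]; ring
  rw [hcast]
  -- rewrite each term
  have hterm : ∀ i ∈ Icc 1 K, q ^ i * (((s i : ℕ) : ℚ) * (((n : ℕ) : ℚ) - ((s i : ℕ) : ℚ))) =
      (q ^ (K+1) * q ^ (K+1) + q ^ (K+1) - q ^ (K+1) * q ^ (K + 1 - i) - q ^ (K+1) * q ^ i) /
        ((q - 1) * (q - 1)) := by
    intro i hi
    rw [mem_Icc] at hi
    have hpow : q ^ (K + 1 - i) = q ^ (K + 1) / q ^ i := by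
      rw [eq_div_iff (pow_ne_zero _ hq0), ← pow_add]
      congr 1
      omega
    rw [hSq, hNq, hpow]
    have hqi : q ^ i ≠ 0 := pow_ne_zero _ hq0
    field_simp
    ring
  rw [Finset.sum_congr rfl hterm, ← Finset.sum_div]
  -- compute the numerator sum
  have hrefl : ∑ i ∈ Icc 1 K, q ^ (K + 1 - i) = ∑ i ∈ Icc 1 K, q ^ i := by
    have h := Finset.sum_Ico_reflect (fun j => q ^ j) 1 (m := K + 1) (n := K + 1) (by omega)
    rw [← Finset.Ico_add_one_right_eq_Icc]
    simp only [show K + 1 + 1 - (K + 1) = 1 by omega, show K + 1 + 1 - 1 = K + 1 by omega] at h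
    exact h
  have hX : ∑ i ∈ Icc 1 K, q ^ i = (q ^ (K + 1) - 1) / (q - 1) - 1 := by
    have h0 : ∑ i ∈ range (K + 1), q ^ i = 1 + ∑ i ∈ Icc 1 K, q ^ i := by
      rw [Finset.range_eq_Ico, Finset.sum_eq_sum_Ico_succ_bot (by omega), ← Finset.Ico_add_one_right_eq_Icc]
      norm_num
    rw [geom_sum_eq hqne1] at h0
    linarith
  have hnum : ∑ i ∈ Icc 1 K,
      (q ^ (K+1) * q ^ (K+1) + q ^ (K+1) - q ^ (K+1) * q ^ (K + 1 - i) - q ^ (K+1) * q ^ i) =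
      (K : ℚ) * (q ^ (K+1) * q ^ (K+1) + q ^ (K+1)) -
        2 * q ^ (K+1) * ((q ^ (K + 1) - 1) / (q - 1) - 1) := by
    rw [Finset.sum_sub_distrib, Finset.sum_sub_distrib, Finset.sum_const, ← Finset.mul_sum,
      ← Finset.mul_sum, hrefl, hX, Nat.card_Icc]
    simp only [Nat.add_sub_cancel]
    push_cast
    ring
  rw [hnum]
  -- final algebra
  have hA : q ^ (K + 1) = q * q ^ K := by rw [pow_succ, mul_comm]
  rw [hA]
  have hKc : ((K : ℚ) + 1) - 1 = (K : ℚ) := by ring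
  push_cast
  rw [hKc]
  set B : ℚ := q ^ K
  field_simp
  ring
end

section
/- Let k ≥ 1 and d ≥ 3, and let T_{k,d} be the regular dendrimer tree of k+1 levels. Then its terminal Wiener index satisfies TW(T_{k,d}) = d(d-1)^{k-1}·[ k·d·(d-1)^{k-1} + (1 - (d-1)^k)/(d-2) ]. -/
open Finset

/-- The pendent vertices of a graph: the vertices of degree 1. -/
def pendentFinset {V : Type*} [Fintype V] (G : SimpleGraph V) [DecidableRel G.Adj] : Finset V :=
  univ.filter (fun v => G.degree v = 1)

/-- The terminal Wiener index of a graph: the sum of the distances over all unordered pairs of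
pendent vertices, i.e. half of the sum over all ordered pairs of pendent vertices. -/
noncomputable def terminalWienerIndex {V : Type*} [Fintype V] (G : SimpleGraph V)
    [DecidableRel G.Adj] : ℕ :=
  (∑ u ∈ pendentFinset G, ∑ v ∈ pendentFinset G, G.dist u v) / 2

set_option linter.unusedSectionVars false
set_option maxHeartbeats 1000000

section BetheAux

open SimpleGraph


variable {V : Type*} [Fintype V] [DecidableEq V] {G : SimpleGraph V} [DecidableRel G.Adj] {r : V}

lemma tree_path_length (hT : G.IsTree) {u v : V} (p : G.Walk u v) (hp : p.IsPath) :
    p.length = G.dist u v := by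
  obtain ⟨q, hq, hql⟩ := hT.isConnected.exists_path_of_dist u v
  obtain ⟨w, _, huniq⟩ := hT.existsUnique_path u v
  rw [huniq p hp, huniq q hq] at *
  exact hql

lemma mem_support_iff_dist (hT : G.IsTree) {a b : V} (p : G.Walk a b) (hp : p.IsPath) (w : V) :
    w ∈ p.support ↔ G.dist a w + G.dist w b = G.dist a b := by
  constructor
  · intro hw
    have h1 := tree_path_length hT _ (hp.takeUntil hw)
    have h2 := tree_path_length hT _ (hp.dropUntil hw)
    have h3 := tree_path_length hT p hp
    have := congr_arg SimpleGraph.Walk.length (p.take_spec hw)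
    rw [SimpleGraph.Walk.length_append] at this
    omega
  · intro hw
    obtain ⟨p1, hp1, hl1⟩ := hT.isConnected.exists_path_of_dist a w
    obtain ⟨p2, hp2, hl2⟩ := hT.isConnected.exists_path_of_dist w b
    have hlen : (p1.append p2).length = G.dist a b := by
      rw [SimpleGraph.Walk.length_append]; omega
    have hpath : (p1.append p2).IsPath := (p1.append p2).isPath_of_length_eq_dist hlen
    obtain ⟨q, _, huniq⟩ := hT.existsUnique_path a b
    have : p1.append p2 = p := (huniq _ hpath).trans (huniq p hp).symm
    rw [← this]
    simp [SimpleGraph.Walk.mem_support_append_iff]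

/-- `w` lies between `a` and `b`. -/
def TBtw (G : SimpleGraph V) (a w b : V) : Prop := G.dist a w + G.dist w b = G.dist a b

lemma tbtw_trans (hT : G.IsTree) {a w m b : V} (h1 : TBtw G a w m) (h2 : TBtw G a m b) :
    TBtw G a w b := by
  have t1 := hT.isConnected.dist_triangle (u := a) (v := w) (w := b)
  have t2 := hT.isConnected.dist_triangle (u := w) (v := m) (w := b)
  unfold TBtw at *
  omega

lemma tbtw_trans' (hT : G.IsTree) {a w m b : V} (h1 : TBtw G a w m) (h2 : TBtw G a m b) :
    TBtw G w m b := by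
  have t1 := hT.isConnected.dist_triangle (u := a) (v := w) (w := b)
  have t2 := hT.isConnected.dist_triangle (u := w) (v := m) (w := b)
  unfold TBtw at *
  omega

lemma tbtw_of_le (hT : G.IsTree) {a w m b : V} (h1 : TBtw G a w b) (h2 : TBtw G a m b)
    (hle : G.dist a w ≤ G.dist a m) : TBtw G a w m := by
  obtain ⟨p, hp, hl⟩ := hT.isConnected.exists_path_of_dist a b
  have hm : m ∈ p.support := (mem_support_iff_dist hT p hp m).2 h2
  have hw : w ∈ p.support := (mem_support_iff_dist hT p hp w).2 h1
  rw [← p.take_spec hm, SimpleGraph.Walk.mem_support_append_iff] at hw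
  rcases hw with hw | hw
  · exact (mem_support_iff_dist hT _ (hp.takeUntil hm) w).1 hw
  · have h3 : TBtw G m w b := (mem_support_iff_dist hT _ (hp.dropUntil hm) w).1 hw
    have hc1 : G.dist m w = G.dist w m := G.dist_comm
    unfold TBtw at *
    have t1 := hT.isConnected.dist_triangle (u := a) (v := m) (w := w)
    have hz : G.dist w m = 0 := by omega
    show G.dist a w + G.dist w m = G.dist a m
    omega

lemma tbtw_antisymm (hT : G.IsTree) {a w m b : V} (h1 : TBtw G a w b) (h2 : TBtw G a m b)
    (heq : G.dist a w = G.dist a m) : w = m := by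
  have h3 := tbtw_of_le hT h1 h2 heq.le
  unfold TBtw at *
  have : G.dist w m = 0 := by omega
  exact (hT.isConnected.dist_eq_zero_iff).1 this

lemma tbtw_trans_mid (hT : G.IsTree) {a m x b : V} (h1 : TBtw G a m b) (h2 : TBtw G m x b) :
    TBtw G a x b := by
  have t1 := hT.isConnected.dist_triangle (u := a) (v := x) (w := b)
  have t2 := hT.isConnected.dist_triangle (u := a) (v := m) (w := x)
  unfold TBtw at *
  omega

lemma exists_lca (hT : G.IsTree) (u v : V) :
    ∃ m, TBtw G r m u ∧ TBtw G r m v ∧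
      G.dist u v + 2 * G.dist r m = G.dist r u + G.dist r v ∧
      ∀ w, TBtw G r w u → TBtw G r w v → TBtw G r w m := by
  classical
  set s : Finset V := univ.filter (fun w => TBtw G r w u ∧ TBtw G r w v) with hs
  have hr : r ∈ s := by
    simp only [hs, Finset.mem_filter, Finset.mem_univ, true_and]
    simp [TBtw, SimpleGraph.dist_self]
  obtain ⟨m, hm, hmax⟩ := s.exists_max_image (fun w => G.dist r w) ⟨r, hr⟩
  simp only [hs, Finset.mem_filter, Finset.mem_univ, true_and] at hm
  obtain ⟨hmu, hmv⟩ := hm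
  have hglb : ∀ w, TBtw G r w u → TBtw G r w v → TBtw G r w m := by
    intro w hwu hwv
    have hws : w ∈ s := by simp [hs, hwu, hwv]
    exact tbtw_of_le hT hwu hmu (hmax w hws)
  refine ⟨m, hmu, hmv, ?_, hglb⟩
  obtain ⟨p1, hp1, hl1⟩ := hT.isConnected.exists_path_of_dist m u
  obtain ⟨p2, hp2, hl2⟩ := hT.isConnected.exists_path_of_dist m v
  have hdisj : ∀ x, x ∈ p1.support → x ∈ p2.support → x = m := by
    intro x hx1 hx2
    have hxu : TBtw G m x u := (mem_support_iff_dist hT p1 hp1 x).1 hx1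
    have hxv : TBtw G m x v := (mem_support_iff_dist hT p2 hp2 x).1 hx2
    have hrxu : TBtw G r x u := tbtw_trans_mid hT hmu hxu
    have hrxv : TBtw G r x v := tbtw_trans_mid hT hmv hxv
    have hxm : TBtw G r x m := hglb x hrxu hrxv
    have hc : G.dist x m = G.dist m x := G.dist_comm
    have : G.dist m x = 0 := by unfold TBtw at *; omega
    exact ((hT.isConnected.dist_eq_zero_iff).1 this).symm
  have hW : (p1.reverse.append p2).IsPath := by
    rw [SimpleGraph.Walk.isPath_def, SimpleGraph.Walk.support_append,
      List.nodup_append]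
    refine ⟨hp1.reverse.support_nodup, ?_, ?_⟩
    · have := hp2.support_nodup
      rw [p2.support_eq_cons] at this
      exact this.of_cons
    · intro x hx1 y hx2 hxy
      subst hxy
      have hx1' : x ∈ p1.support := by
        rw [SimpleGraph.Walk.support_reverse] at hx1
        simpa using hx1
      have hx2' : x ∈ p2.support := List.mem_of_mem_tail hx2
      have hxm := hdisj x hx1' hx2'
      subst hxm
      have := hp2.support_nodup
      rw [p2.support_eq_cons] at this
      exact this.notMem hx2
  have hWl := tree_path_length hT _ hW
  rw [SimpleGraph.Walk.length_append, SimpleGraph.Walk.length_reverse, hl1, hl2] at hWl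
  have c1 : G.dist u m = G.dist m u := G.dist_comm
  unfold TBtw at hmu hmv
  omega

open scoped Classical in
/-- the ancestors of `u` (vertices between `r` and `u`), as a finset -/
noncomputable def ancF (G : SimpleGraph V) (r u : V) : Finset V :=
  univ.filter (fun w => TBtw G r w u)

lemma mem_ancF {G : SimpleGraph V} {r u w : V} : w ∈ ancF G r u ↔ TBtw G r w u := by
  simp [ancF]

lemma card_ancF (hT : G.IsTree) (u : V) : (ancF G r u).card = G.dist r u + 1 := by
  obtain ⟨p, hp, hl⟩ := hT.isConnected.exists_path_of_dist r u
  have : ancF G r u = p.support.toFinset := by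
    ext w
    simp [mem_ancF, List.mem_toFinset, mem_support_iff_dist hT p hp w, TBtw]
  rw [this, List.toFinset_card_of_nodup hp.support_nodup,
    SimpleGraph.Walk.length_support, hl]

lemma dist_add_card (hT : G.IsTree) (u v : V) :
    G.dist u v + 2 * ((ancF G r u ∩ ancF G r v).card) = G.dist r u + G.dist r v + 2 := by
  obtain ⟨m, hmu, hmv, hdist, hglb⟩ := exists_lca (r := r) hT u v
  have hinter : ancF G r u ∩ ancF G r v = ancF G r m := by
    ext w
    simp only [Finset.mem_inter, mem_ancF]
    constructor
    · rintro ⟨h1, h2⟩; exact hglb w h1 h2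
    · intro h; exact ⟨tbtw_trans hT h hmu, tbtw_trans hT h hmv⟩
  rw [hinter, card_ancF hT m]
  omega

lemma exists_parent (hT : G.IsTree) {v : V} (hv : 0 < G.dist r v) :
    ∃ p, G.Adj v p ∧ G.dist r p + 1 = G.dist r v ∧ TBtw G r p v := by
  have hvr : 0 < G.dist v r := by rwa [G.dist_comm]
  obtain ⟨q, hql⟩ := (hT.isConnected v r).exists_walk_length_eq_dist
  cases q with
  | nil => simp at hql; simp [SimpleGraph.dist_self] at hvr
  | @cons _ p _ h q' =>
    refine ⟨p, h, ?_, ?_⟩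
    · have h1 : G.dist p r ≤ q'.length := SimpleGraph.dist_le q'
      have h2 : q'.length + 1 = G.dist v r := by simpa using hql
      have h3 := hT.isConnected.dist_triangle (u := r) (v := p) (w := v)
      have h4 : G.dist p v = 1 := SimpleGraph.dist_eq_one_iff_adj.2 h.symm
      have c1 : G.dist r p = G.dist p r := G.dist_comm
      have c2 : G.dist r v = G.dist v r := G.dist_comm
      omega
    · have h1 : G.dist p r ≤ q'.length := SimpleGraph.dist_le q'
      have h2 : q'.length + 1 = G.dist v r := by simpa using hql
      have h3 := hT.isConnected.dist_triangle (u := r) (v := p) (w := v)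
      have h4 : G.dist p v = 1 := SimpleGraph.dist_eq_one_iff_adj.2 h.symm
      have c1 : G.dist r p = G.dist p r := G.dist_comm
      have c2 : G.dist r v = G.dist v r := G.dist_comm
      unfold TBtw
      omega

lemma parent_unique (hT : G.IsTree) {v p1 p2 : V} (h1 : G.Adj v p1) (h2 : G.Adj v p2)
    (e1 : G.dist r p1 + 1 = G.dist r v) (e2 : G.dist r p2 + 1 = G.dist r v) : p1 = p2 := by
  have d1 : G.dist p1 v = 1 := SimpleGraph.dist_eq_one_iff_adj.2 h1.symm
  have d2 : G.dist p2 v = 1 := SimpleGraph.dist_eq_one_iff_adj.2 h2.symm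
  have b1 : TBtw G r p1 v := by unfold TBtw; omega
  have b2 : TBtw G r p2 v := by unfold TBtw; omega
  exact tbtw_antisymm hT b1 b2 (by omega)

open scoped Classical in
noncomputable def par (G : SimpleGraph V) (r v : V) : V :=
  if h : ∃ p, G.Adj v p ∧ G.dist r p + 1 = G.dist r v ∧ TBtw G r p v then h.choose else v

lemma par_spec (hT : G.IsTree) {v : V} (hv : 0 < G.dist r v) :
    G.Adj v (par G r v) ∧ G.dist r (par G r v) + 1 = G.dist r v ∧ TBtw G r (par G r v) v := by
  have h := exists_parent hT hv
  rw [par, dif_pos h]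
  exact h.choose_spec

open scoped Classical in
noncomputable def subT (G : SimpleGraph V) (r w : V) (j : ℕ) : Finset V :=
  univ.filter (fun u => G.dist r u = j ∧ TBtw G r w u)

lemma mem_subT {G : SimpleGraph V} {r w u : V} {j : ℕ} :
    u ∈ subT G r w j ↔ G.dist r u = j ∧ TBtw G r w u := by simp [subT]

lemma card_subT (hT : G.IsTree) {k : ℕ} {ds : ℕ → ℕ}
    (hchild : ∀ i ∈ Finset.Icc 1 k, ∀ v : V, G.dist r v = i - 1 →
      ((G.neighborFinset v).filter (fun u => G.dist r u = i)).card = ds i)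
    (w : V) (j : ℕ) (hw : G.dist r w ≤ j) (hj : j ≤ k) :
    (subT G r w j).card = ∏ t ∈ Finset.Icc (G.dist r w + 1) j, ds t := by
  classical
  set i := G.dist r w with hi
  clear_value i
  induction j, hw using Nat.le_induction with
  | base =>
    have : subT G r w i = {w} := by
      ext u
      simp only [mem_subT, Finset.mem_singleton]
      constructor
      · rintro ⟨h1, h2⟩
        unfold TBtw at h2
        have : G.dist w u = 0 := by omega
        exact ((hT.isConnected.dist_eq_zero_iff).1 this).symm
      · rintro rfl
        refine ⟨hi.symm, ?_⟩
        unfold TBtw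
        simp [SimpleGraph.dist_self]
    rw [this]
    simp
  | succ j hij ih =>
    have hjk : j ≤ k := by omega
    have ihv := ih hjk
    have hmaps : ∀ u ∈ subT G r w (j + 1), par G r u ∈ subT G r w j := by
      intro u hu
      rw [mem_subT] at hu
      obtain ⟨hd, hb⟩ := hu
      have hpos : 0 < G.dist r u := by omega
      obtain ⟨hadj, hpd, hpb⟩ := par_spec hT hpos
      rw [mem_subT]
      refine ⟨by omega, ?_⟩
      exact tbtw_of_le hT hb hpb (by omega)
    rw [Finset.card_eq_sum_card_fiberwise hmaps]
    have hfib : ∀ p ∈ subT G r w j,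
        ((subT G r w (j + 1)).filter (fun u => par G r u = p)).card = ds (j + 1) := by
      intro p hp
      rw [mem_subT] at hp
      obtain ⟨hpd, hpb⟩ := hp
      have : (subT G r w (j + 1)).filter (fun u => par G r u = p)
          = (G.neighborFinset p).filter (fun u => G.dist r u = j + 1) := by
        ext u
        simp only [Finset.mem_filter, mem_subT, SimpleGraph.mem_neighborFinset]
        constructor
        · rintro ⟨⟨hd, _⟩, hpar⟩
          have hpos : 0 < G.dist r u := by omega
          obtain ⟨hadj, _, _⟩ := par_spec hT hpos
          rw [hpar] at hadj
          exact ⟨hadj.symm, hd⟩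
        · rintro ⟨hadj, hd⟩
          have hpos : 0 < G.dist r u := by omega
          obtain ⟨hadj', hpd', hpb'⟩ := par_spec hT hpos
          have hpar : par G r u = p :=
            parent_unique hT hadj' hadj.symm hpd' (by omega)
          have hbpu : TBtw G r p u := by
            have : G.dist p u = 1 := SimpleGraph.dist_eq_one_iff_adj.2 hadj
            unfold TBtw; omega
          exact ⟨⟨hd, tbtw_trans hT hpb hbpu⟩, hpar⟩
      rw [this]
      exact hchild (j + 1) (by simp; omega) p (by simpa using hpd)
    rw [Finset.sum_congr rfl hfib, Finset.sum_const, ihv, smul_eq_mul,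
      Finset.prod_Icc_succ_top (show i + 1 ≤ j + 1 by omega)]


end BetheAux

/-- Terminal Wiener index of the regular dendrimer tree `T_{k,d}` of `k+1` levels (the
generalized Bethe tree of `k+1` levels whose degree sequence is `d₁ = d` and `dᵢ = d - 1` for
`2 ≤ i ≤ k`):
`TW(T_{k,d}) = d (d-1)^{k-1} · [ k d (d-1)^{k-1} + (1 - (d-1)^k)/(d-2) ]`. -/
theorem terminal_wiener_index_dendrimer {V : Type*} [Fintype V] (G : SimpleGraph V)
    [DecidableRel G.Adj] (r : V) (k d : ℕ) (hk : 1 ≤ k) (hd : 3 ≤ d)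
    (ds : ℕ → ℕ) (hds1 : ds 1 = d) (hdsi : ∀ i, 2 ≤ i → i ≤ k → ds i = d - 1)
    (hG : IsGeneralizedBetheTree G r k ds) :
    (terminalWienerIndex G : ℚ) =
      (d : ℚ) * ((d : ℚ) - 1) ^ (k - 1) *
        ((k : ℚ) * (d : ℚ) * ((d : ℚ) - 1) ^ (k - 1)
          + (1 - ((d : ℚ) - 1) ^ k) / ((d : ℚ) - 2)) := by
  classical
  obtain ⟨hT, hchild, hle, hpend⟩ := hG
  have := Fintype.card_pos_iff.mpr ⟨r⟩
  set P : Finset V := subT G r r k with hP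
  -- ds values are at least 2
  have hds2 : ∀ t, 1 ≤ t → t ≤ k → 2 ≤ ds t := by
    intro t h1 h2
    rcases Nat.eq_or_lt_of_le h1 with h | h
    · rw [← h, hds1]; omega
    · rw [hdsi t (by omega) h2]; omega
  -- every vertex at distance < k has degree at least 2
  have hPeq : pendentFinset G = P := by
    ext v
    simp only [pendentFinset, Finset.mem_filter, Finset.mem_univ, true_and, hP, mem_subT]
    constructor
    · intro hdeg
      rcases Nat.eq_or_lt_of_le (hle v) with h | h
      · exact ⟨h, by unfold TBtw; simp [SimpleGraph.dist_self]⟩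
      · exfalso
        set i := G.dist r v with hi
        have hmem : i + 1 ∈ Finset.Icc 1 k := by simp; omega
        have hcard := hchild (i + 1) hmem v (by omega)
        have hsub : ((G.neighborFinset v).filter (fun u => G.dist r u = i + 1)).card
            ≤ G.degree v := by
          rw [← SimpleGraph.card_neighborFinset_eq_degree]
          exact Finset.card_le_card (Finset.filter_subset _ _)
        have := hds2 (i + 1) (by omega) (by omega)
        omega
    · rintro ⟨h, -⟩
      exact hpend v h
  have hN : P.card = ∏ t ∈ Finset.Icc 1 k, ds t := by
    have := card_subT (r := r) hT hchild r k (by simp [SimpleGraph.dist_self]) le_rfl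
    rwa [SimpleGraph.dist_self] at this
  have hkP : ∀ u ∈ P, G.dist r u = k := by
    intro u hu; rw [hP, mem_subT] at hu; exact hu.1
  have hkey : ∀ u ∈ P, ∀ v ∈ P,
      G.dist u v + 2 * ((ancF G r u ∩ ancF G r v).card) = 2 * k + 2 := by
    intro u hu v hv
    have := dist_add_card (r := r) hT u v
    rw [hkP u hu, hkP v hv] at this
    omega
  set S : ℕ := ∑ u ∈ P, ∑ v ∈ P, G.dist u v with hS
  have hsum1 : S + 2 * (∑ u ∈ P, ∑ v ∈ P, ((ancF G r u ∩ ancF G r v).card))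
      = (2 * k + 2) * (P.card * P.card) := by
    have h1 : ∑ u ∈ P, ∑ v ∈ P,
        (G.dist u v + 2 * ((ancF G r u ∩ ancF G r v).card)) = ∑ u ∈ P, ∑ v ∈ P, (2 * k + 2) :=
      Finset.sum_congr rfl fun u hu => Finset.sum_congr rfl fun v hv => hkey u hu v hv
    simp only [Finset.sum_add_distrib, ← Finset.mul_sum, Finset.sum_const, smul_eq_mul] at h1
    rw [hS]
    ring_nf at h1 ⊢
    omega
  -- swap the summation order
  have hswap : (∑ u ∈ P, ∑ v ∈ P, ((ancF G r u ∩ ancF G r v).card))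
      = ∑ w : V, ((subT G r w k).card) * ((subT G r w k).card) := by
    have hone : ∀ u v : V, ((ancF G r u ∩ ancF G r v).card)
        = ∑ w : V, (if w ∈ ancF G r u then 1 else 0) * (if w ∈ ancF G r v then 1 else 0) := by
      intro u v
      have : ∀ w : V, (if w ∈ ancF G r u then 1 else 0) * (if w ∈ ancF G r v then 1 else 0)
          = if w ∈ ancF G r u ∩ ancF G r v then 1 else 0 := by
        intro w
        by_cases h1 : w ∈ ancF G r u <;> by_cases h2 : w ∈ ancF G r v <;>
          simp [h1, h2, Finset.mem_inter]
      rw [Finset.sum_congr rfl (fun w _ => this w), Finset.sum_ite_mem, Finset.univ_inter,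
        Finset.sum_const, smul_eq_mul, mul_one]
    have hcnt : ∀ w : V, (∑ u ∈ P, if w ∈ ancF G r u then 1 else 0) = (subT G r w k).card := by
      intro w
      rw [← Finset.sum_filter]
      have : P.filter (fun u => w ∈ ancF G r u) = subT G r w k := by
        ext u
        simp only [Finset.mem_filter, hP, mem_subT, mem_ancF]
        constructor
        · rintro ⟨⟨h1, -⟩, h2⟩; exact ⟨h1, h2⟩
        · rintro ⟨h1, h2⟩
          exact ⟨⟨h1, by unfold TBtw; simp [SimpleGraph.dist_self]⟩, h2⟩
      rw [this]
      simp
    calc ∑ u ∈ P, ∑ v ∈ P, ((ancF G r u ∩ ancF G r v).card)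
        = ∑ u ∈ P, ∑ v ∈ P, ∑ w : V,
            (if w ∈ ancF G r u then 1 else 0) * (if w ∈ ancF G r v then 1 else 0) :=
          Finset.sum_congr rfl fun u _ => Finset.sum_congr rfl fun v _ => hone u v
      _ = ∑ u ∈ P, ∑ w : V, ∑ v ∈ P,
            (if w ∈ ancF G r u then 1 else 0) * (if w ∈ ancF G r v then 1 else 0) :=
          Finset.sum_congr rfl fun u _ => Finset.sum_comm
      _ = ∑ w : V, ∑ u ∈ P, ∑ v ∈ P,
            (if w ∈ ancF G r u then 1 else 0) * (if w ∈ ancF G r v then 1 else 0) :=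
          Finset.sum_comm
      _ = ∑ w : V, (∑ u ∈ P, if w ∈ ancF G r u then 1 else 0) *
            (∑ v ∈ P, if w ∈ ancF G r v then 1 else 0) := by
          refine Finset.sum_congr rfl fun w _ => ?_
          rw [Finset.sum_mul_sum]
      _ = ∑ w : V, ((subT G r w k).card) * ((subT G r w k).card) :=
          Finset.sum_congr rfl fun w _ => by rw [hcnt w]
  have hsubcard : ∀ w : V, (subT G r w k).card = ∏ t ∈ Finset.Icc (G.dist r w + 1) k, ds t :=
    fun w => card_subT hT hchild w k (hle w) le_rfl
  have hfib : ∀ i ∈ Finset.range (k + 1),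
      (∑ w ∈ univ.filter (fun w => G.dist r w = i), (subT G r w k).card * (subT G r w k).card)
      = (∏ t ∈ Finset.Icc 1 i, ds t) *
          ((∏ t ∈ Finset.Icc (i + 1) k, ds t) * (∏ t ∈ Finset.Icc (i + 1) k, ds t)) := by
    intro i hi
    rw [Finset.mem_range] at hi
    have hic : (univ.filter (fun w => G.dist r w = i)) = subT G r r i := by
      ext w; simp [mem_subT, TBtw, SimpleGraph.dist_self]
    have h1 : ∀ w ∈ univ.filter (fun w => G.dist r w = i),
        (subT G r w k).card * (subT G r w k).card
        = (∏ t ∈ Finset.Icc (i + 1) k, ds t) * (∏ t ∈ Finset.Icc (i + 1) k, ds t) := by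
      intro w hw
      have hwi : G.dist r w = i := (Finset.mem_filter.1 hw).2
      rw [hsubcard w, hwi]
    rw [Finset.sum_congr rfl h1, Finset.sum_const, hic, smul_eq_mul]
    congr 1
    have := card_subT (r := r) hT hchild r i (by simp [SimpleGraph.dist_self]) (by omega)
    rwa [SimpleGraph.dist_self] at this
  have hfiber : (∑ w : V, (subT G r w k).card * (subT G r w k).card)
      = ∑ i ∈ Finset.range (k + 1), (∏ t ∈ Finset.Icc 1 i, ds t) *
          ((∏ t ∈ Finset.Icc (i + 1) k, ds t) * (∏ t ∈ Finset.Icc (i + 1) k, ds t)) := by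
    rw [← Finset.sum_fiberwise_of_maps_to (g := fun w => G.dist r w)
      (t := Finset.range (k + 1)) (fun w _ => Finset.mem_range.2 (Nat.lt_succ_of_le (hle w)))]
    exact Finset.sum_congr rfl hfib
  rw [hswap, hfiber, hN] at hsum1
  -- evaluate the products
  have hB : ∀ i, 1 ≤ i → (∏ t ∈ Finset.Icc (i + 1) k, ds t) = (d - 1) ^ (k - i) := by
    intro i h1
    rw [Finset.prod_congr rfl (fun t ht => hdsi t (by rw [Finset.mem_Icc] at ht; omega)
      (by rw [Finset.mem_Icc] at ht; exact ht.2)), Finset.prod_const, Nat.card_Icc]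
    congr 1
    omega
  have hL : ∀ i, 1 ≤ i → i ≤ k → (∏ t ∈ Finset.Icc 1 i, ds t) = d * (d - 1) ^ (i - 1) := by
    intro i h1 h2
    have hins : Finset.Icc 1 i = insert 1 (Finset.Icc 2 i) := by
      ext t; simp only [Finset.mem_Icc, Finset.mem_insert]; omega
    rw [hins, Finset.prod_insert (by simp), hds1,
      Finset.prod_congr rfl (fun t ht => hdsi t (Finset.mem_Icc.1 ht).1
        (le_trans (Finset.mem_Icc.1 ht).2 h2)), Finset.prod_const, Nat.card_Icc,
      show i + 1 - 2 = i - 1 by omega]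
  have hNval : (∏ t ∈ Finset.Icc 1 k, ds t) = d * (d - 1) ^ (k - 1) := hL k hk le_rfl
  have hTval : (∑ i ∈ Finset.range (k + 1), (∏ t ∈ Finset.Icc 1 i, ds t) *
          ((∏ t ∈ Finset.Icc (i + 1) k, ds t) * (∏ t ∈ Finset.Icc (i + 1) k, ds t)))
      = (∑ i ∈ Finset.range k, (d * (d - 1) ^ i) *
          ((d - 1) ^ (k - i - 1) * (d - 1) ^ (k - i - 1)))
        + (d * (d - 1) ^ (k - 1)) * (d * (d - 1) ^ (k - 1)) := by
    rw [Finset.sum_range_succ']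
    congr 1
    · refine Finset.sum_congr rfl fun i hi => ?_
      rw [Finset.mem_range] at hi
      rw [hL (i + 1) (by omega) (by omega), hB (i + 1) (by omega)]
      congr 3 <;> omega
    · rw [show Finset.Icc 1 0 = (∅ : Finset ℕ) by simp, Finset.prod_empty, one_mul,
        show (0 : ℕ) + 1 = 1 by rfl, hNval]
  rw [hTval, hNval] at hsum1
  -- S is twice the terminal Wiener index
  have htwS : terminalWienerIndex G = S / 2 := by
    rw [terminalWienerIndex, hPeq, ← hS]
  obtain ⟨c, hc⟩ : ∃ c, (2 * k + 2) * ((d * (d - 1) ^ (k - 1)) * (d * (d - 1) ^ (k - 1)))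
      = 2 * c := ⟨(k + 1) * ((d * (d - 1) ^ (k - 1)) * (d * (d - 1) ^ (k - 1))), by ring⟩
  have htw2 : 2 * terminalWienerIndex G = S := by
    rw [htwS]; omega
  have hnat : 2 * terminalWienerIndex G
      + 2 * ((∑ i ∈ Finset.range k, (d * (d - 1) ^ i) *
          ((d - 1) ^ (k - i - 1) * (d - 1) ^ (k - i - 1)))
        + (d * (d - 1) ^ (k - 1)) * (d * (d - 1) ^ (k - 1)))
      = (2 * k + 2) * ((d * (d - 1) ^ (k - 1)) * (d * (d - 1) ^ (k - 1))) := by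
    omega
  -- pass to ℚ
  have hq := congrArg (fun n : ℕ => (n : ℚ)) hnat
  push_cast [Nat.cast_sub (show 1 ≤ d by omega)] at hq
  have hd3 : (3 : ℚ) ≤ (d : ℚ) := by exact_mod_cast hd
  have hd2 : ((d : ℚ) - 2) ≠ 0 := by intro h; nlinarith
  have hne1 : ((d : ℚ) - 1) ≠ 1 := by intro h; nlinarith
  have hgeo : ∑ i ∈ Finset.range k, ((d : ℚ) - 1) ^ i
      = (((d : ℚ) - 1) ^ k - 1) / ((d : ℚ) - 2) := by
    rw [geom_sum_eq hne1 k, show ((d : ℚ) - 1) - 1 = (d : ℚ) - 2 by ring]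
  have hre : ∑ i ∈ Finset.range k, (d : ℚ) * ((d : ℚ) - 1) ^ i *
        (((d : ℚ) - 1) ^ (k - i - 1) * ((d : ℚ) - 1) ^ (k - i - 1))
      = (d : ℚ) * ((d : ℚ) - 1) ^ (k - 1) * ((((d : ℚ) - 1) ^ k - 1) / ((d : ℚ) - 2)) := by
    rw [← Finset.sum_range_reflect]
    have hterm : ∀ i ∈ Finset.range k, (d : ℚ) * ((d : ℚ) - 1) ^ (k - 1 - i) *
        (((d : ℚ) - 1) ^ (k - (k - 1 - i) - 1) * ((d : ℚ) - 1) ^ (k - (k - 1 - i) - 1))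
        = (d : ℚ) * ((d : ℚ) - 1) ^ (k - 1) * ((d : ℚ) - 1) ^ i := by
      intro i hi
      rw [Finset.mem_range] at hi
      rw [show k - (k - 1 - i) - 1 = i by omega, mul_assoc, mul_assoc]
      congr 1
      rw [← pow_add, ← pow_add, ← pow_add]
      congr 1
      omega
    rw [Finset.sum_congr rfl hterm, ← Finset.mul_sum, hgeo]
  rw [hre] at hq
  field_simp at hq ⊢
  linarith
end
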